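/- Let L be a positive integer, let X be a random variable taking values in a finite set Ω of cardinality L, and let S ⊆ Ω be a subset with |S| ≤ L/4. If P[X ∈ S] ≥ 1/3, then the Shannon entropy with base-2 logarithms satisfies H(X) ≤ log₂ L − (1/3)·log₂(256/243); moreover (1/3)·log₂(256/243) > 1/40, so in particular H(X) < log₂ L − 1/40. -/

import Mathlib

open Finset

/-- Shannon entropy (base-2 logarithms) of a probability mass function on a finite set. -/
noncomputable def shannonEntropy {Ω : Type*} [Fintype Ω] (p : Ω → ℝ) : ℝ :=
  -∑ ω, p ω * Real.logb 2 (p ω)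

lemma tangent_log {t a l : ℝ} (ht : 0 ≤ t) (ha : 0 < a) (hl : 0 < l) :
    t * (Real.log l + 1) - l * a ≤ t * Real.log (t / a) := by
  rcases eq_or_lt_of_le ht with h | h
  · rw [← h]
    have : 0 < l * a := mul_pos hl ha
    simp
    linarith
  · have hx : 0 < l * a / t := by positivity
    have h1 := Real.log_le_sub_one_of_pos hx
    have h5 : t * Real.log (l * a / t) ≤ t * (l * a / t - 1) :=
      mul_le_mul_of_nonneg_left h1 h.le
    have h4 : t * (l * a / t - 1) = l * a - t := by field_simp
    have h2 : Real.log (l * a / t) = Real.log l + Real.log a - Real.log t := by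
      rw [Real.log_div (by positivity) (ne_of_gt h), Real.log_mul (ne_of_gt hl) (ne_of_gt ha)]
    have h3 : Real.log (t / a) = Real.log t - Real.log a :=
      Real.log_div (ne_of_gt h) (ne_of_gt ha)
    rw [h4, h2] at h5
    rw [h3]
    nlinarith [h5]

lemma ent_group {α : Type*} (T : Finset α) (p : α → ℝ) (q : ℝ)
    (h0 : ∀ x ∈ T, 0 ≤ p x) (hq : ∑ x ∈ T, p x = q) :
    -∑ x ∈ T, p x * Real.log (p x) ≤ q * Real.log ((T.card : ℝ) / q) := by
  rcases eq_or_lt_of_le (hq ▸ Finset.sum_nonneg h0 : (0:ℝ) ≤ q) with h | hqpos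
  · have hall : ∀ x ∈ T, p x = 0 :=
      (Finset.sum_eq_zero_iff_of_nonneg h0).mp (hq.trans h.symm)
    rw [Finset.sum_eq_zero (fun x hx => by rw [hall x hx, zero_mul]), ← h]
    simp
  · have hT : T.Nonempty := by
      rcases T.eq_empty_or_nonempty with h | h
      · rw [h, Finset.sum_empty] at hq; exact absurd hq.symm (ne_of_gt hqpos)
      · exact h
    have hn : (0:ℝ) < (T.card : ℝ) := by exact_mod_cast hT.card_pos
    set r : ℝ := q / T.card with hr
    have hrpos : 0 < r := div_pos hqpos hn
    have key : ∑ x ∈ T, (p x - r) ≤ ∑ x ∈ T, p x * Real.log (p x / r) := by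
      refine Finset.sum_le_sum fun x hx => ?_
      have := tangent_log (h0 x hx) hrpos one_pos
      simpa using this
    have hleft : ∑ x ∈ T, (p x - r) = 0 := by
      rw [Finset.sum_sub_distrib, hq, Finset.sum_const, nsmul_eq_mul, hr]
      field_simp
      ring
    have hterm : ∀ x ∈ T, p x * Real.log (p x / r) = p x * Real.log (p x) - p x * Real.log r := by
      intro x hx
      rcases eq_or_lt_of_le (h0 x hx) with h | h
      · rw [← h]; simp
      · rw [Real.log_div (ne_of_gt h) (ne_of_gt hrpos)]; ring
    have hR : ∑ x ∈ T, p x * Real.log (p x / r)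
        = (∑ x ∈ T, p x * Real.log (p x)) - q * Real.log r := by
      rw [Finset.sum_congr rfl hterm, Finset.sum_sub_distrib, ← Finset.sum_mul, hq]
    rw [hleft, hR] at key
    have hflip : (T.card : ℝ) / q = r⁻¹ := by rw [hr, inv_div]
    rw [hflip, Real.log_inv]
    linarith

set_option maxHeartbeats 1000000 in
theorem stmt_9 {Ω : Type*} [Fintype Ω] [DecidableEq Ω] (L : ℕ) (hL : 0 < L)
    (hcard : Fintype.card Ω = L)
    (D : Ω → ℝ) (hD0 : ∀ x, 0 ≤ D x) (hD1 : ∑ x, D x = 1)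
    (S : Finset Ω) (hS : (S.card : ℝ) ≤ (L : ℝ) / 4)
    -- P[X ∈ S] ≥ 1/3
    (hPS : (1 : ℝ) / 3 ≤ ∑ x ∈ S, D x) :
    shannonEntropy D ≤ Real.logb 2 L - (1 / 3) * Real.logb 2 (256 / 243) ∧
    (1 / 40 : ℝ) < (1 / 3) * Real.logb 2 (256 / 243) ∧
    shannonEntropy D < Real.logb 2 L - 1 / 40 := by
  have hlog2 : (0:ℝ) < Real.log 2 := Real.log_pos (by norm_num)
  have hL' : (0:ℝ) < (L:ℝ) := by exact_mod_cast hL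
  set q : ℝ := ∑ x ∈ S, D x with hqdef
  have hq3 : (1:ℝ)/3 ≤ q := hPS
  have hq0 : (0:ℝ) < q := by linarith
  have hcompl : ∑ x ∈ Sᶜ, D x = 1 - q := by
    have h := Finset.sum_add_sum_compl S D
    rw [hD1] at h; linarith
  have hq'0 : (0:ℝ) ≤ 1 - q := by
    rw [← hcompl]; exact Finset.sum_nonneg fun x _ => hD0 x
  have hSne : S.Nonempty := by
    rcases S.eq_empty_or_nonempty with h | h
    · rw [hqdef, h, Finset.sum_empty] at hq0; exact absurd hq0 (lt_irrefl 0)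
    · exact h
  have hs1 : (1:ℝ) ≤ (S.card : ℝ) := by exact_mod_cast hSne.card_pos
  have hSle : S.card ≤ L := by rw [← hcard]; exact S.card_le_univ
  have hscomp : ((Sᶜ.card : ℕ) : ℝ) = (L:ℝ) - (S.card : ℝ) := by
    rw [Finset.card_compl, hcard, Nat.cast_sub hSle]
  have hs'pos : (0:ℝ) < (L:ℝ) - (S.card : ℝ) := by linarith
  -- grouping bounds
  have A1 := ent_group S D q (fun x _ => hD0 x) hqdef.symm
  have A2 := ent_group Sᶜ D (1 - q) (fun x _ => hD0 x) hcompl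
  rw [hscomp] at A2
  -- tangent bounds
  have hl1 : (0:ℝ) < 4/(3*(L:ℝ)) := by positivity
  have hl2 : (0:ℝ) < 8/(9*(L:ℝ)) := by positivity
  have B1 := tangent_log hq0.le (lt_of_lt_of_le one_pos hs1) hl1
  have B2 := tangent_log hq'0 hs'pos hl2
  -- flip logs
  have E1 : q * Real.log ((S.card : ℝ)/q) = -(q * Real.log (q/(S.card : ℝ))) := by
    rw [show (S.card : ℝ)/q = (q/(S.card : ℝ))⁻¹ from (inv_div _ _).symm, Real.log_inv, mul_neg]
  have E2 : (1-q) * Real.log (((L:ℝ) - S.card)/(1-q))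
      = -((1-q) * Real.log ((1-q)/((L:ℝ) - S.card))) := by
    rw [show ((L:ℝ) - S.card)/(1-q) = ((1-q)/((L:ℝ) - S.card))⁻¹ from (inv_div _ _).symm,
      Real.log_inv, mul_neg]
  -- log expansions
  have hX1 : Real.log (4/(3*(L:ℝ))) = Real.log (3/2) + Real.log (8/9) - Real.log L := by
    rw [show (4:ℝ)/(3*(L:ℝ)) = ((3:ℝ)/2*(8/9))/(L:ℝ) from by ring,
      Real.log_div (by norm_num) (ne_of_gt hL'), Real.log_mul (by norm_num) (by norm_num)]
  have hX2 : Real.log (8/(9*(L:ℝ))) = Real.log (8/9) - Real.log L := by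
    rw [show (8:ℝ)/(9*(L:ℝ)) = ((8:ℝ)/9)/(L:ℝ) from by ring,
      Real.log_div (by norm_num) (ne_of_gt hL')]
  have h256 : Real.log ((256:ℝ)/243) = Real.log (3/2) + 3 * Real.log (8/9) := by
    rw [show (256:ℝ)/243 = (3/2) * (8/9)^(3:ℕ) from by norm_num,
      Real.log_mul (by norm_num) (by positivity), Real.log_pow]
    norm_num
  have ha : (0:ℝ) < Real.log (3/2) := Real.log_pos (by norm_num)
  have hmono : (1/3 : ℝ) * Real.log (3/2) ≤ q * Real.log (3/2) :=
    mul_le_mul_of_nonneg_right hq3 ha.le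
  have hcomb : (4/(3*(L:ℝ))) * (S.card : ℝ) + (8/(9*(L:ℝ))) * ((L:ℝ) - S.card) ≤ 1 := by
    rw [show (4/(3*(L:ℝ))) * (S.card : ℝ) + (8/(9*(L:ℝ))) * ((L:ℝ) - (S.card:ℝ))
        = (12*(S.card:ℝ) + 8*((L:ℝ) - S.card))/(9*(L:ℝ)) from by field_simp; ring,
      div_le_one (by positivity)]
    linarith
  -- core natural-log inequality
  have core : -∑ x, D x * Real.log (D x) ≤ Real.log L - (1/3) * Real.log ((256:ℝ)/243) := by
    have hsplit : ∑ x, D x * Real.log (D x)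
        = (∑ x ∈ S, D x * Real.log (D x)) + ∑ x ∈ Sᶜ, D x * Real.log (D x) :=
      (Finset.sum_add_sum_compl S _).symm
    rw [hsplit, h256]
    rw [hX1] at B1
    rw [hX2] at B2
    rw [E1] at A1
    rw [E2] at A2
    linarith [A1, A2, B1, B2, hcomb, hmono]
  have hshan : shannonEntropy D = (-∑ x, D x * Real.log (D x)) / Real.log 2 := by
    simp only [shannonEntropy, Real.logb, ← mul_div_assoc]
    rw [← Finset.sum_div]
    ring
  have G1 : shannonEntropy D ≤ Real.logb 2 L - (1 / 3) * Real.logb 2 (256 / 243) := by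
    rw [hshan, Real.logb, Real.logb,
      show Real.log (L:ℝ)/Real.log 2 - 1/3 * (Real.log ((256:ℝ)/243)/Real.log 2)
        = (Real.log (L:ℝ) - 1/3 * Real.log ((256:ℝ)/243))/Real.log 2 from by ring]
    gcongr
  have G2 : (1 / 40 : ℝ) < (1 / 3) * Real.logb 2 (256 / 243) := by
    have hpow : (8:ℝ) < ((256:ℝ)/243)^(40:ℕ) := by
      rw [div_pow, lt_div_iff₀ (by positivity)]
      norm_num
    have h1 : Real.log (((256:ℝ)/243)^(40:ℕ)) = 40 * Real.log ((256:ℝ)/243) := by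
      rw [Real.log_pow]; norm_num
    have h2 : Real.log (8:ℝ) = 3 * Real.log 2 := by
      rw [show (8:ℝ) = 2^(3:ℕ) from by norm_num, Real.log_pow]; norm_num
    have h3 : 3 * Real.log 2 < 40 * Real.log ((256:ℝ)/243) := by
      rw [← h1, ← h2]; exact Real.log_lt_log (by norm_num) hpow
    rw [Real.logb,
      show (1:ℝ)/3 * (Real.log ((256:ℝ)/243)/Real.log 2)
        = ((1:ℝ)/3 * Real.log ((256:ℝ)/243))/Real.log 2 from by ring,
      lt_div_iff₀ hlog2]
    linarith
  exact ⟨G1, G2, by linarith⟩
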